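/- Let A = [1/(x_i − y_j)] be an invertible k × k Cauchy matrix (x_i pairwise distinct, y_j pairwise distinct, x_i ≠ y_j for all i,j). Then the inverse B = A^{-1} has entries b_{ij} = (x_j − y_i) · A_j(y_i) · B_i(x_j), where A_j(x) = ∏_{ℓ≠j} (x − x_ℓ)/(x_j − x_ℓ) and B_i(y) = ∏_{ℓ≠i} (y − y_ℓ)/(y_i − y_ℓ) are the Lagrange basis polynomials. -/

import Mathlib

open Finset Polynomial

lemma cauchy_key {k : ℕ} (x y : Fin k → ℝ)
    (hx : Function.Injective x) (hy : Function.Injective y)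
    (hxy : ∀ i j, x i ≠ y j) (i m : Fin k) :
    ∑ j, (x i - y j)⁻¹ * ((x m - y j) *
        (∏ l ∈ Finset.univ.erase m, (y j - x l) / (x m - x l)) *
        (∏ l ∈ Finset.univ.erase j, (x m - y l) / (y j - y l))) =
      if i = m then 1 else 0 := by
  set D : ℝ := ∏ l ∈ Finset.univ.erase m, (x m - x l) with hD_def
  have hD : D ≠ 0 := by
    refine Finset.prod_ne_zero_iff.mpr fun l hl => sub_ne_zero.mpr ?_
    exact fun h => (Finset.mem_erase.mp hl).1 (hx h).symm
  set P : ℝ[X] := C D⁻¹ * ∏ l ∈ Finset.univ.erase i, (X - C (x l)) with hP_def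
  have hQdeg : (∏ l ∈ Finset.univ.erase i, (X - C (x l))).degree
      = ((Finset.univ.erase i).card : WithBot ℕ) := by
    rw [Polynomial.degree_prod]
    simp [Polynomial.degree_X_sub_C]
  have hdeg : P.degree < (Finset.univ : Finset (Fin k)).card := by
    rw [hP_def, Polynomial.degree_mul, Polynomial.degree_C (inv_ne_zero hD), zero_add, hQdeg,
      Finset.card_erase_of_mem (Finset.mem_univ i), Finset.card_univ, Fintype.card_fin]
    exact_mod_cast Nat.sub_lt i.pos one_pos
  have hinterp := Lagrange.eq_interpolate (s := Finset.univ) (v := y) hy.injOn hdeg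
  have hevalP : ∀ t : ℝ, P.eval t = D⁻¹ * ∏ l ∈ Finset.univ.erase i, (t - x l) := by
    intro t; simp [hP_def, Polynomial.eval_prod]
  have hevalB : ∀ j : Fin k, (Lagrange.basis Finset.univ y j).eval (x m)
      = ∏ l ∈ Finset.univ.erase j, (x m - y l) / (y j - y l) := by
    intro j
    rw [Lagrange.basis, Polynomial.eval_prod]
    refine Finset.prod_congr rfl fun l hl => ?_
    rw [Lagrange.basisDivisor]
    simp [div_eq_inv_mul]
  have key : ∑ j, P.eval (y j) * (Lagrange.basis Finset.univ y j).eval (x m)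
      = P.eval (x m) := by
    conv_rhs => rw [hinterp]
    rw [Lagrange.interpolate_apply, Polynomial.eval_finset_sum]
    simp
  have hterm : ∀ j : Fin k, (x i - y j)⁻¹ * ((x m - y j) *
        (∏ l ∈ Finset.univ.erase m, (y j - x l) / (x m - x l)) *
        (∏ l ∈ Finset.univ.erase j, (x m - y l) / (y j - y l)))
      = P.eval (y j) * (Lagrange.basis Finset.univ y j).eval (x m) := by
    intro j
    rw [hevalP, hevalB]
    have hxi : x i - y j ≠ 0 := sub_ne_zero.mpr (hxy i j)
    have hprod : (x m - y j) * ∏ l ∈ Finset.univ.erase m, (y j - x l)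
        = (x i - y j) * ∏ l ∈ Finset.univ.erase i, (y j - x l) := by
      have h1 : (y j - x m) * ∏ l ∈ Finset.univ.erase m, (y j - x l)
          = ∏ l, (y j - x l) :=
        Finset.mul_prod_erase Finset.univ (fun l => y j - x l) (Finset.mem_univ m)
      have h2 : (y j - x i) * ∏ l ∈ Finset.univ.erase i, (y j - x l)
          = ∏ l, (y j - x l) :=
        Finset.mul_prod_erase Finset.univ (fun l => y j - x l) (Finset.mem_univ i)
      linear_combination h2 - h1
    have hp1 : ∏ l ∈ Finset.univ.erase m, (y j - x l) / (x m - x l)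
        = (∏ l ∈ Finset.univ.erase m, (y j - x l)) / D := by
      rw [hD_def, ← Finset.prod_div_distrib]
    have hmain : (x i - y j)⁻¹ * ((x m - y j) * ((∏ l ∈ Finset.univ.erase m, (y j - x l)) / D))
        = D⁻¹ * ∏ l ∈ Finset.univ.erase i, (y j - x l) := by
      field_simp
      linear_combination hprod
    rw [hp1, ← mul_assoc, hmain]
  calc ∑ j, (x i - y j)⁻¹ * ((x m - y j) *
        (∏ l ∈ Finset.univ.erase m, (y j - x l) / (x m - x l)) *
        (∏ l ∈ Finset.univ.erase j, (x m - y l) / (y j - y l)))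
      = ∑ j, P.eval (y j) * (Lagrange.basis Finset.univ y j).eval (x m) :=
        Finset.sum_congr rfl fun j _ => hterm j
    _ = P.eval (x m) := key
    _ = if i = m then 1 else 0 := by
        rw [hevalP]
        by_cases him : i = m
        · subst him; simp [← hD_def, inv_mul_cancel₀ hD]
        · rw [if_neg him]
          have : (x m - x m) = 0 := sub_self _
          rw [Finset.prod_eq_zero (Finset.mem_erase.mpr ⟨Ne.symm him, Finset.mem_univ m⟩) this,
            mul_zero]

/-- The inverse of the Cauchy matrix A = [1/(x_i − y_j)] is
B = [(x_j − y_i) A_j(y_i) B_i(x_j)] built from Lagrange basis polynomials. -/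
theorem cauchy_matrix_inverse {k : ℕ} (x y : Fin k → ℝ)
    (hx : Function.Injective x) (hy : Function.Injective y)
    (hxy : ∀ i j, x i ≠ y j) :
    (Matrix.of fun i j => (x i - y j)⁻¹) *
        (Matrix.of fun i j : Fin k => (x j - y i) *
          (∏ l ∈ Finset.univ.erase j, (y i - x l) / (x j - x l)) *
          (∏ l ∈ Finset.univ.erase i, (x j - y l) / (y i - y l))) = 1 ∧
      (Matrix.of fun i j : Fin k => (x j - y i) *
          (∏ l ∈ Finset.univ.erase j, (y i - x l) / (x j - x l)) *
          (∏ l ∈ Finset.univ.erase i, (x j - y l) / (y i - y l))) *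
        (Matrix.of fun i j => (x i - y j)⁻¹) = 1 := by
  have h1 : (Matrix.of fun i j => (x i - y j)⁻¹) *
        (Matrix.of fun i j : Fin k => (x j - y i) *
          (∏ l ∈ Finset.univ.erase j, (y i - x l) / (x j - x l)) *
          (∏ l ∈ Finset.univ.erase i, (x j - y l) / (y i - y l))) = 1 := by
    ext i m
    rw [Matrix.mul_apply, Matrix.one_apply]
    simpa using cauchy_key x y hx hy hxy i m
  exact ⟨h1, mul_eq_one_comm.mp h1⟩
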